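/- Exact Gaussian-sum posterior for linear, Gaussian mixture systems: let the prior density be the Gaussian mixture ∑_{i=1}^N w_i N(x; x̄_i, P̄_i) with weights w_i ≥ 0, at least one positive, means x̄_i ∈ ℝⁿ, and symmetric positive definite covariances P̄_i, and let the likelihood be N(y; H x, R). For each i set S_i = H P̄_i Hᵀ + R, K_i = P̄_i Hᵀ S_i⁻¹, x̂_i = x̄_i + K_i (y − H x̄_i), and P̂_i = P̄_i − K_i H P̄_i. Then for every x ∈ ℝⁿ, (∑_{i=1}^N w_i N(y; H x, R) N(x; x̄_i, P̄_i)) / (∑_{j=1}^N w_j N(y; H x̄_j, S_j)) = ∑_{i=1}^N ŵ_i N(x; x̂_i, P̂_i), where ŵ_i = w_i N(y; H x̄_i, S_i) / (∑_{j=1}^N w_j N(y; H x̄_j, S_j)); that is, the exact Bayesian posterior is a Gaussian mixture whose components are the Kalman-updated components (with positive definite covariances P̂_i) and whose weights are proportional to w_i N(y; H x̄_i, S_i). -/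

import Mathlib

open Matrix

/-- The Gaussian density `N(z; μ, Σ)` on `ℝᵈ`. -/
noncomputable def gaussPDF {d : ℕ} (z μ : Fin d → ℝ) (Sig : Matrix (Fin d) (Fin d) ℝ) : ℝ :=
  ((2 * Real.pi) ^ d * Sig.det) ^ (-(1 / 2 : ℝ)) *
    Real.exp (-(1 / 2 : ℝ) * ((z - μ) ⬝ᵥ (Sig⁻¹ *ᵥ (z - μ))))

/-- Exact Gaussian-sum posterior for linear, Gaussian mixture systems: the exact Bayesian
posterior of a Gaussian mixture prior under a linear-Gaussian likelihood is the Gaussian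
mixture of the Kalman-updated components, with weights proportional to
`w_i N(y; H x̄_i, S_i)`. -/

lemma dp_mulVec_left {m n : ℕ} (B : Matrix (Fin m) (Fin n) ℝ) (v : Fin n → ℝ) (x : Fin m → ℝ) :
    (B *ᵥ v) ⬝ᵥ x = v ⬝ᵥ (Bᵀ *ᵥ x) := by
  rw [dotProduct_comm, dotProduct_mulVec, mulVec_transpose, dotProduct_comm]

lemma quad_eq {m n : ℕ} (H : Matrix (Fin m) (Fin n) ℝ)
    (Rinv Sinv : Matrix (Fin m) (Fin m) ℝ)
    (Pinv M : Matrix (Fin n) (Fin n) ℝ) (K : Matrix (Fin n) (Fin m) ℝ)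
    (hM : M = Pinv + Hᵀ * Rinv * H)
    (hMK : M * K = Hᵀ * Rinv)
    (hKM : Kᵀ * M = Rinv * H)
    (hKMK : Kᵀ * (M * K) = Rinv - Sinv)
    (u : Fin m → ℝ) (v : Fin n → ℝ) :
    (u - H *ᵥ v) ⬝ᵥ (Rinv *ᵥ (u - H *ᵥ v)) + v ⬝ᵥ (Pinv *ᵥ v)
      = u ⬝ᵥ (Sinv *ᵥ u) + (v - K *ᵥ u) ⬝ᵥ (M *ᵥ (v - K *ᵥ u)) := by
  have e1 : Hᵀ * (Rinv * H) = M - Pinv := by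
    rw [hM, ← Matrix.mul_assoc]; abel
  have e3 : Hᵀ * Rinv = M * K := hMK.symm
  have e2 : Rinv * H = Kᵀ * M := hKM.symm
  simp only [mulVec_sub, dotProduct_sub, sub_dotProduct, dp_mulVec_left, mulVec_mulVec]
  rw [e1, e2, e3, hKMK]
  simp only [sub_mulVec, dotProduct_sub]
  ring

lemma gaussPDF_pos {d : ℕ} (z μ : Fin d → ℝ) {Sig : Matrix (Fin d) (Fin d) ℝ}
    (h : Sig.PosDef) : 0 < gaussPDF z μ Sig := by
  have hd : 0 < Sig.det := h.det_pos
  have h1 : (0:ℝ) < (2 * Real.pi) ^ d * Sig.det := by positivity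
  exact mul_pos (Real.rpow_pos_of_pos h1 _) (Real.exp_pos _)

lemma component {m n : ℕ}
    (H : Matrix (Fin m) (Fin n) ℝ) {R : Matrix (Fin m) (Fin m) ℝ} (hR : R.PosDef)
    {P : Matrix (Fin n) (Fin n) ℝ} (hP : P.PosDef) :
    (P - P * Hᵀ * (H * P * Hᵀ + R)⁻¹ * H * P).PosDef ∧
    ∀ (y : Fin m → ℝ) (xb x : Fin n → ℝ),
      gaussPDF y (H *ᵥ x) R * gaussPDF x xb P
        = gaussPDF y (H *ᵥ xb) (H * P * Hᵀ + R) *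
          gaussPDF x (xb + (P * Hᵀ * (H * P * Hᵀ + R)⁻¹) *ᵥ (y - H *ᵥ xb))
            (P - P * Hᵀ * (H * P * Hᵀ + R)⁻¹ * H * P) := by
  set S : Matrix (Fin m) (Fin m) ℝ := H * P * Hᵀ + R with hSdef
  set K : Matrix (Fin n) (Fin m) ℝ := P * Hᵀ * S⁻¹ with hKdef
  set Ph : Matrix (Fin n) (Fin n) ℝ := P - P * Hᵀ * S⁻¹ * H * P with hPhdef
  set M : Matrix (Fin n) (Fin n) ℝ := P⁻¹ + Hᵀ * R⁻¹ * H with hMdef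
  have hPsymm : Pᵀ = P := by exact (by simpa using hP.isHermitian : P.IsSymm)
  have hRsymm : Rᵀ = R := by exact (by simpa using hR.isHermitian : R.IsSymm)
  have hSpd : S.PosDef := by
    have h1 : (H * P * Hᵀ).PosSemidef := by
      simpa using hP.posSemidef.mul_mul_conjTranspose_same H
    exact Matrix.PosDef.posSemidef_add h1 hR
  have hMpd : M.PosDef := by
    have h1 : (Hᵀ * R⁻¹ * H).PosSemidef := by
      simpa using hR.inv.posSemidef.conjTranspose_mul_mul_same H
    exact Matrix.PosDef.add_posSemidef hP.inv h1
  have hSsymm : Sᵀ = S := by exact (by simpa using hSpd.isHermitian : S.IsSymm)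
  have hPu : IsUnit P.det := hP.det_pos.ne'.isUnit
  have hRu : IsUnit R.det := hR.det_pos.ne'.isUnit
  have hSu : IsUnit S.det := hSpd.det_pos.ne'.isUnit
  have hMu : IsUnit M.det := hMpd.det_pos.ne'.isUnit
  have hPii : P⁻¹⁻¹ = P := Matrix.nonsing_inv_nonsing_inv _ hPu
  have hRii : R⁻¹⁻¹ = R := Matrix.nonsing_inv_nonsing_inv _ hRu
  have hHPH : H * P * Hᵀ = S - R := by rw [hSdef]; abel
  -- Woodbury : Ph = M⁻¹
  have hwood : M⁻¹ = Ph := by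
    rw [hMdef, Matrix.add_mul_mul_inv_eq_sub _ _ _ _ hP.inv.isUnit hR.inv.isUnit
      (by rw [hPii, hRii, add_comm R]; exact hSpd.isUnit), hPii, hRii, add_comm R, ← hSdef, hPhdef]
  have hPhpd : Ph.PosDef := hwood ▸ hMpd.inv
  have hPhinv : Ph⁻¹ = M := by
    rw [← hwood, Matrix.nonsing_inv_nonsing_inv _ hMu]
  -- matrix identities
  have key : H * (P * (Hᵀ * S⁻¹)) = 1 - R * S⁻¹ := by
    have h : H * (P * (Hᵀ * S⁻¹)) = H * P * Hᵀ * S⁻¹ := by simp [Matrix.mul_assoc]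
    rw [h, hHPH, Matrix.sub_mul, Matrix.mul_nonsing_inv _ hSu]
  have hMK : M * K = Hᵀ * R⁻¹ := by
    rw [hMdef, hKdef]
    simp only [Matrix.add_mul, Matrix.mul_assoc]
    rw [Matrix.nonsing_inv_mul_cancel_left _ _ hPu, key, Matrix.mul_sub, Matrix.mul_one,
      Matrix.nonsing_inv_mul_cancel_left _ _ hRu, Matrix.mul_sub]
    abel
  have hMsymm : Mᵀ = M := by exact (by simpa using hMpd.isHermitian : M.IsSymm)
  have hKT : Kᵀ = S⁻¹ * (H * P) := by
    rw [hKdef]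
    simp [Matrix.transpose_mul, Matrix.transpose_nonsing_inv, hSsymm, hPsymm, Matrix.mul_assoc]
  have hKM : Kᵀ * M = R⁻¹ * H := by
    calc Kᵀ * M = Kᵀ * Mᵀ := by rw [hMsymm]
    _ = (M * K)ᵀ := by rw [← Matrix.transpose_mul]
    _ = (Hᵀ * R⁻¹)ᵀ := by rw [hMK]
    _ = R⁻¹ * H := by
        rw [Matrix.transpose_mul, Matrix.transpose_transpose, Matrix.transpose_nonsing_inv, hRsymm]
  have key2 : H * (P * (Hᵀ * R⁻¹)) = S * R⁻¹ - 1 := by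
    have h : H * (P * (Hᵀ * R⁻¹)) = H * P * Hᵀ * R⁻¹ := by simp [Matrix.mul_assoc]
    rw [h, hHPH, Matrix.sub_mul, Matrix.mul_nonsing_inv _ hRu]
  have hKMK : Kᵀ * (M * K) = R⁻¹ - S⁻¹ := by
    rw [hMK, hKT]
    simp only [Matrix.mul_assoc]
    rw [key2, Matrix.mul_sub, Matrix.mul_one, Matrix.nonsing_inv_mul_cancel_left _ _ hSu]
  -- determinant identity
  have hdet : S.det * Ph.det = R.det * P.det := by
    letI := S.invertibleOfIsUnitDet hSu
    letI := P.invertibleOfIsUnitDet hPu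
    have hb1 := Matrix.det_fromBlocks₁₁ S (H * P) (P * Hᵀ) P
    have hb2 := Matrix.det_fromBlocks₂₂ S (H * P) (P * Hᵀ) P
    rw [Matrix.invOf_eq_nonsing_inv] at hb1 hb2
    have e1 : P - P * Hᵀ * S⁻¹ * (H * P) = Ph := by rw [hPhdef]; simp [Matrix.mul_assoc]
    have e2 : S - H * P * P⁻¹ * (P * Hᵀ) = R := by
      have : H * P * P⁻¹ * (P * Hᵀ) = H * P * Hᵀ := by
        simp only [Matrix.mul_assoc, Matrix.nonsing_inv_mul_cancel_left _ _ hPu]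
      rw [this, hHPH]; abel
    rw [e1] at hb1
    rw [e2] at hb2
    rw [← hb1, hb2, mul_comm]
  refine ⟨hPhpd, fun y xb x => ?_⟩
  -- coefficient equality
  have hπ : (0:ℝ) < 2 * Real.pi := by positivity
  have hcoef : ((2 * Real.pi) ^ m * R.det) ^ (-(1/2 : ℝ)) * ((2 * Real.pi) ^ n * P.det) ^ (-(1/2 : ℝ))
      = ((2 * Real.pi) ^ m * S.det) ^ (-(1/2 : ℝ)) * ((2 * Real.pi) ^ n * Ph.det) ^ (-(1/2 : ℝ)) := by
    rw [Real.mul_rpow (by positivity) hR.det_pos.le, Real.mul_rpow (by positivity) hP.det_pos.le,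
      Real.mul_rpow (by positivity) hSpd.det_pos.le, Real.mul_rpow (by positivity) hPhpd.det_pos.le]
    have : R.det ^ (-(1/2:ℝ)) * P.det ^ (-(1/2:ℝ)) = S.det ^ (-(1/2:ℝ)) * Ph.det ^ (-(1/2:ℝ)) := by
      rw [← Real.mul_rpow hR.det_pos.le hP.det_pos.le, ← Real.mul_rpow hSpd.det_pos.le hPhpd.det_pos.le, hdet]
    calc ((2 * Real.pi) ^ m) ^ (-(1/2:ℝ)) * R.det ^ (-(1/2:ℝ)) * (((2 * Real.pi) ^ n) ^ (-(1/2:ℝ)) * P.det ^ (-(1/2:ℝ)))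
        = ((2 * Real.pi) ^ m) ^ (-(1/2:ℝ)) * ((2 * Real.pi) ^ n) ^ (-(1/2:ℝ)) * (R.det ^ (-(1/2:ℝ)) * P.det ^ (-(1/2:ℝ))) := by ring
      _ = ((2 * Real.pi) ^ m) ^ (-(1/2:ℝ)) * ((2 * Real.pi) ^ n) ^ (-(1/2:ℝ)) * (S.det ^ (-(1/2:ℝ)) * Ph.det ^ (-(1/2:ℝ))) := by rw [this]
      _ = _ := by ring
  -- exponent equality
  set u : Fin m → ℝ := y - H *ᵥ xb with hu
  set v : Fin n → ℝ := x - xb with hv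
  have hyx : y - H *ᵥ x = u - H *ᵥ v := by
    rw [hu, hv, mulVec_sub]; abel
  have hxh : x - (xb + K *ᵥ u) = v - K *ᵥ u := by rw [hv]; abel
  have hquad := quad_eq H R⁻¹ S⁻¹ P⁻¹ M K hMdef hMK hKM hKMK u v
  have hexp : Real.exp (-(1/2:ℝ) * ((u - H *ᵥ v) ⬝ᵥ (R⁻¹ *ᵥ (u - H *ᵥ v)))) *
        Real.exp (-(1/2:ℝ) * (v ⬝ᵥ (P⁻¹ *ᵥ v)))
      = Real.exp (-(1/2:ℝ) * (u ⬝ᵥ (S⁻¹ *ᵥ u))) *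
        Real.exp (-(1/2:ℝ) * ((v - K *ᵥ u) ⬝ᵥ (M *ᵥ (v - K *ᵥ u)))) := by
    rw [← Real.exp_add, ← Real.exp_add, ← mul_add, ← mul_add, hquad]
  have final : ∀ a b c d e1 e2 e3 e4 : ℝ, a * b = c * d → e1 * e2 = e3 * e4 →
      (a * e1) * (b * e2) = (c * e3) * (d * e4) := by
    intro a b c d e1 e2 e3 e4 h1 h2
    calc (a * e1) * (b * e2) = (a * b) * (e1 * e2) := by ring
      _ = (c * d) * (e3 * e4) := by rw [h1, h2]
      _ = (c * e3) * (d * e4) := by ring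
  -- assemble
  unfold gaussPDF
  rw [hyx, hxh, hPhinv, ← hv]
  exact final _ _ _ _ _ _ _ _ hcoef hexp
theorem exact_gaussian_sum_posterior
    (n m N : ℕ) (hn : 0 < n) (hm : 0 < m) (hN : 0 < N)
    (H : Matrix (Fin m) (Fin n) ℝ)
    (R : Matrix (Fin m) (Fin m) ℝ) (hR : R.PosDef)
    (y : Fin m → ℝ)
    (w : Fin N → ℝ) (hw : ∀ i, 0 ≤ w i) (hw' : ∃ i, 0 < w i)
    (xbar : Fin N → (Fin n → ℝ))
    (Pbar : Fin N → Matrix (Fin n) (Fin n) ℝ) (hPbar : ∀ i, (Pbar i).PosDef)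
    (S : Fin N → Matrix (Fin m) (Fin m) ℝ) (hS : ∀ i, S i = H * Pbar i * Hᵀ + R)
    (K : Fin N → Matrix (Fin n) (Fin m) ℝ) (hK : ∀ i, K i = Pbar i * Hᵀ * (S i)⁻¹)
    (xhat : Fin N → (Fin n → ℝ))
    (hxhat : ∀ i, xhat i = xbar i + K i *ᵥ (y - H *ᵥ xbar i))
    (Phat : Fin N → Matrix (Fin n) (Fin n) ℝ)
    (hPhat : ∀ i, Phat i = Pbar i - K i * H * Pbar i)
    (what : Fin N → ℝ)
    (hwhat : ∀ i, what i = w i * gaussPDF y (H *ᵥ xbar i) (S i) /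
      (∑ j, w j * gaussPDF y (H *ᵥ xbar j) (S j))) :
    (∀ i, (Phat i).PosDef) ∧
      ∀ x : Fin n → ℝ,
        (∑ i, w i * (gaussPDF y (H *ᵥ x) R * gaussPDF x (xbar i) (Pbar i))) /
            (∑ j, w j * gaussPDF y (H *ᵥ xbar j) (S j)) =
          ∑ i, what i * gaussPDF x (xhat i) (Phat i) := by
  have hPhat' : ∀ i, Phat i =
      Pbar i - Pbar i * Hᵀ * (H * Pbar i * Hᵀ + R)⁻¹ * H * Pbar i := fun i => by
    rw [hPhat i, hK i, hS i]
  have hxhat' : ∀ i, xhat i =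
      xbar i + (Pbar i * Hᵀ * (H * Pbar i * Hᵀ + R)⁻¹) *ᵥ (y - H *ᵥ xbar i) := fun i => by
    rw [hxhat i, hK i, hS i]
  have hPD : ∀ i, (Phat i).PosDef := fun i => by
    rw [hPhat' i]; exact (component H hR (hPbar i)).1
  have hEq : ∀ i (x : Fin n → ℝ),
      gaussPDF y (H *ᵥ x) R * gaussPDF x (xbar i) (Pbar i)
        = gaussPDF y (H *ᵥ xbar i) (S i) * gaussPDF x (xhat i) (Phat i) := fun i x => by
    rw [hS i, hxhat' i, hPhat' i]
    exact (component H hR (hPbar i)).2 y (xbar i) x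
  have hSpd : ∀ j, (S j).PosDef := fun j => by
    rw [hS j]
    have h1 : (H * Pbar j * Hᵀ).PosSemidef := by
      simpa using (hPbar j).posSemidef.mul_mul_conjTranspose_same H
    exact Matrix.PosDef.posSemidef_add h1 hR
  have hD : 0 < ∑ j, w j * gaussPDF y (H *ᵥ xbar j) (S j) := by
    obtain ⟨i, hi⟩ := hw'
    refine Finset.sum_pos' (fun j _ => mul_nonneg (hw j) (gaussPDF_pos _ _ (hSpd j)).le)
      ⟨i, Finset.mem_univ i, mul_pos hi (gaussPDF_pos _ _ (hSpd i))⟩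
  refine ⟨hPD, fun x => ?_⟩
  rw [Finset.sum_congr rfl (fun i _ => by rw [hEq i x] :
    ∀ i ∈ Finset.univ, w i * (gaussPDF y (H *ᵥ x) R * gaussPDF x (xbar i) (Pbar i))
      = w i * (gaussPDF y (H *ᵥ xbar i) (S i) * gaussPDF x (xhat i) (Phat i)))]
  rw [Finset.sum_div]
  refine Finset.sum_congr rfl fun i _ => ?_
  rw [hwhat i, div_mul_eq_mul_div, ← mul_assoc]
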